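/- Let n, d, q be natural numbers with n ≥ 1, q ≥ 1 and q ≥ 2·d·n, and let P ∈ MvPolynomial (Fin n) ℤ satisfy degreeOf i P ≤ d for all i. If there exists a : Fin n → ℤ with eval a P ≠ 0, then the number of points b in the grid S_q^n with eval b P = 0 is at most q^n / 2; equivalently, twice the number of roots of P in the grid S_q^n is at most q^n. -/

import Mathlib

open MvPolynomial

lemma sz_aux (d q : ℕ) : ∀ (n : ℕ) (P : MvPolynomial (Fin n) ℤ), P ≠ 0 →
    (∀ i : Fin n, P.degreeOf i ≤ d) →
    ((Fintype.piFinset fun _ : Fin n => Finset.Ico (0:ℤ) (q:ℤ)).filter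
      fun b => eval b P = 0).card * q ≤ d * n * q ^ n := by
  intro n
  induction n with
  | zero =>
    intro P hP _
    have : ((Fintype.piFinset fun _ : Fin 0 => Finset.Ico (0:ℤ) (q:ℤ)).filter
        fun b => eval b P = 0) = ∅ := by
      apply Finset.filter_false_of_mem
      intro b _
      obtain ⟨c, rfl⟩ := MvPolynomial.C_surjective (Fin 0) P
      simp only [eval_C]
      intro hc
      exact hP (by rw [hc, map_zero])
    rw [this, Finset.card_empty, Nat.zero_mul]
    exact Nat.zero_le _
  | succ n ih =>
    intro P hP hdeg
    set G1 : Finset ℤ := Finset.Ico (0:ℤ) (q:ℤ) with hG1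
    set Gn := Fintype.piFinset fun _ : Fin n => G1 with hGn
    set Gn1 := Fintype.piFinset fun _ : Fin (n+1) => G1 with hGn1
    set Q := finSuccEquiv ℤ n P with hQ
    have hQ0 : Q ≠ 0 := by
      intro h
      exact hP ((finSuccEquiv ℤ n).injective (by rw [← hQ, h, map_zero]))
    set L := Q.coeff Q.natDegree with hL
    have hL0 : L ≠ 0 := by
      rw [hL, ← Polynomial.leadingCoeff]
      exact Polynomial.leadingCoeff_ne_zero.2 hQ0
    have hLdeg : ∀ j : Fin n, L.degreeOf j ≤ d := fun j =>
      le_trans (degreeOf_coeff_finSuccEquiv P j _) (hdeg j.succ)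
    have hQd : Q.natDegree ≤ d := by
      rw [hQ, natDegree_finSuccEquiv]; exact hdeg 0
    have hG1card : G1.card = q := by simp [hG1]
    have hGncard : Gn.card = q ^ n := by simp [hGn, hG1card]
    set s := Gn1.filter fun b => eval b P = 0 with hs
    -- fiberwise count
    have hmap : ∀ b ∈ s, Fin.tail b ∈ Gn := by
      intro b hb
      rw [hs, Finset.mem_filter] at hb
      simp only [hGn, Fintype.mem_piFinset]
      intro i
      have := (Fintype.mem_piFinset.1 hb.1) i.succ
      exact this
    have hcard : s.card = ∑ y ∈ Gn, (s.filter fun b => Fin.tail b = y).card :=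
      Finset.card_eq_sum_card_fiberwise hmap
    -- each fiber bound
    have hfiber : ∀ y ∈ Gn, (s.filter fun b => Fin.tail b = y).card ≤
        if eval y L = 0 then q else d := by
      intro y _
      have hinj : Set.InjOn (fun b : Fin (n+1) → ℤ => b 0)
          ↑(s.filter fun b => Fin.tail b = y) := by
        intro b hb b' hb' h
        simp only [Finset.coe_filter, Set.mem_setOf_eq] at hb hb'
        rw [← Fin.cons_self_tail b, ← Fin.cons_self_tail b', hb.2, hb'.2,
          show b 0 = b' 0 from h]
      by_cases hy : eval y L = 0
      · rw [if_pos hy]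
        calc (s.filter fun b => Fin.tail b = y).card ≤ G1.card := by
              apply Finset.card_le_card_of_injOn (fun b => b 0) _ hinj
              intro b hb
              rw [Finset.mem_coe, Finset.mem_filter, hs, Finset.mem_filter] at hb
              exact (Fintype.mem_piFinset.1 hb.1.1) 0
          _ = q := hG1card
      · rw [if_neg hy]
        set p : Polynomial ℤ := Q.map (eval y) with hp
        have hp0 : p ≠ 0 := by
          intro h
          apply hy
          have : p.coeff Q.natDegree = eval y L := by
            simp [hp, hL, Polynomial.coeff_map]
          rw [← this, h, Polynomial.coeff_zero]
        calc (s.filter fun b => Fin.tail b = y).card ≤ p.roots.toFinset.card := by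
              apply Finset.card_le_card_of_injOn (fun b => b 0) _ hinj
              intro b hb
              rw [Finset.mem_coe, Finset.mem_filter, hs, Finset.mem_filter] at hb
              rw [Finset.mem_coe, Multiset.mem_toFinset, Polynomial.mem_roots hp0]
              have hb0 : eval b P = 0 := hb.1.2
              have : b = Fin.cons (b 0) y := by
                rw [← hb.2, Fin.cons_self_tail]
              rw [this, eval_eq_eval_mv_eval'] at hb0
              exact hb0
          _ ≤ Multiset.card p.roots := Multiset.toFinset_card_le _
          _ ≤ p.natDegree := Polynomial.card_roots' p
          _ ≤ Q.natDegree := Polynomial.natDegree_map_le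
          _ ≤ d := hQd
    have hsum : s.card ≤ (Gn.filter fun y => eval y L = 0).card * q + q ^ n * d := by
      rw [hcard]
      calc ∑ y ∈ Gn, (s.filter fun b => Fin.tail b = y).card
          ≤ ∑ y ∈ Gn, (if eval y L = 0 then q else d) := Finset.sum_le_sum hfiber
        _ = (Gn.filter fun y => eval y L = 0).card * q +
            (Gn.filter fun y => ¬ eval y L = 0).card * d := by
            rw [Finset.sum_ite, Finset.sum_const, Finset.sum_const, smul_eq_mul, smul_eq_mul]
        _ ≤ (Gn.filter fun y => eval y L = 0).card * q + q ^ n * d := by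
            gcongr
            calc (Gn.filter fun y => ¬ eval y L = 0).card ≤ Gn.card :=
                  Finset.card_filter_le _ _
              _ = q ^ n := hGncard
    have ihL := ih L hL0 hLdeg
    calc s.card * q ≤ ((Gn.filter fun y => eval y L = 0).card * q + q ^ n * d) * q := by
          exact Nat.mul_le_mul_right q hsum
      _ = (Gn.filter fun y => eval y L = 0).card * q * q + q ^ n * d * q := by ring
      _ ≤ d * n * q ^ n * q + q ^ n * d * q := by
          gcongr
      _ = d * (n + 1) * q ^ (n + 1) := by ring

theorem roots_at_most_half_grid (n d q : ℕ) (hn : 1 ≤ n) (hq : 1 ≤ q)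
    (hq2 : 2 * d * n ≤ q)
    (P : MvPolynomial (Fin n) ℤ) (hdeg : ∀ i : Fin n, P.degreeOf i ≤ d)
    (a : Fin n → ℤ) (ha : eval a P ≠ 0) :
    2 * {b : Fin n → ℤ | (∀ i, 0 ≤ b i ∧ b i < (q : ℤ)) ∧ eval b P = 0}.ncard
      ≤ q ^ n := by
  have hP : P ≠ 0 := by rintro rfl; simp at ha
  have hset : {b : Fin n → ℤ | (∀ i, 0 ≤ b i ∧ b i < (q : ℤ)) ∧ eval b P = 0} =
      ↑((Fintype.piFinset fun _ : Fin n => Finset.Ico (0:ℤ) (q:ℤ)).filter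
        fun b => eval b P = 0) := by
    ext b
    simp [Fintype.mem_piFinset, Finset.mem_Ico]
  rw [hset, Set.ncard_coe_finset]
  have h := sz_aux d q n P hP hdeg
  set c := ((Fintype.piFinset fun _ : Fin n => Finset.Ico (0:ℤ) (q:ℤ)).filter
    fun b => eval b P = 0).card
  have h2 : 2 * c * q ≤ q ^ n * q := by
    calc 2 * c * q = 2 * (c * q) := by ring
      _ ≤ 2 * (d * n * q ^ n) := Nat.mul_le_mul_left 2 h
      _ = (2 * d * n) * q ^ n := by ring
      _ ≤ q * q ^ n := Nat.mul_le_mul_right _ hq2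
      _ = q ^ n * q := by ring
  exact Nat.le_of_mul_le_mul_right h2 hq
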